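/- arXiv:1011.2592 — 3 statements merged into one kernel-verified Lean document; each statement's English description precedes it below -/
import Mathlib

section
/- Let ε be a real-valued random variable with cumulative distribution function F(s) = P(ε ≤ s). Suppose P(ε = 0) = 0 and F(0) = α for some α ∈ (0,1). Then for every t ∈ ℝ, E[τ_α(ε − t) − τ_α(ε)] = ∫₀^t (F(s) − α) ds (with the convention ∫₀^t = −∫_t^0 for t < 0); in particular, the expectation is well defined since |τ_α(ε − t) − τ_α(ε)| ≤ |t| almost surely. -/
open MeasureTheory

/-- The check function `τ_α(u) = u (α − 1{u < 0})`. -/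
noncomputable def checkFn (α u : ℝ) : ℝ := u * (α - if u < 0 then 1 else 0)

lemma checkFn_neg {α u : ℝ} (h : u < 0) : checkFn α u = u * (α - 1) := by
  simp [checkFn, h]

lemma checkFn_nonneg {α u : ℝ} (h : 0 ≤ u) : checkFn α u = u * α := by
  simp [checkFn, not_lt.2 h]

lemma ind_int (u a b : ℝ) (hab : a ≤ b) :
    ∫ s in a..b, (if u < s then (1:ℝ) else 0) = max (b - max a u) 0 := by
  have h1 : (fun s => if u < s then (1:ℝ) else 0) = (Set.Ioi u).indicator (fun _ => (1:ℝ)) := by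
    funext s; simp [Set.indicator_apply, Set.mem_Ioi]
  rw [intervalIntegral.integral_of_le hab, h1,
    MeasureTheory.setIntegral_indicator measurableSet_Ioi, Set.Ioc_inter_Ioi,
    MeasureTheory.setIntegral_const]
  simp [Real.volume_Ioc, max_comm a u]

lemma ind_intble (u : ℝ) {a b : ℝ} :
    IntervalIntegrable (fun s => if u < s then (1:ℝ) else 0) volume a b := by
  apply Monotone.intervalIntegrable
  intro x y hxy
  by_cases h : u < x
  · simp [h, h.trans_le hxy]
  · by_cases h' : u < y <;> simp [h, h']

lemma key (α t u : ℝ) :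
    checkFn α (u - t) - checkFn α u = ∫ s in (0:ℝ)..t, ((if u < s then (1:ℝ) else 0) - α) := by
  rw [intervalIntegral.integral_sub (ind_intble u) intervalIntegrable_const,
    intervalIntegral.integral_const]
  rcases le_total 0 t with ht | ht
  · rw [ind_int u 0 t ht]
    rcases lt_or_ge u 0 with hu | hu
    · rw [checkFn_neg hu, checkFn_neg (by linarith : u - t < 0),
        max_eq_left hu.le, max_eq_left (by linarith : (0:ℝ) ≤ t - 0)]
      simp; ring
    · rw [checkFn_nonneg hu, max_eq_right hu]
      rcases lt_or_ge u t with h1 | h1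
      · rw [checkFn_neg (by linarith : u - t < 0), max_eq_left (by linarith : (0:ℝ) ≤ t - u)]
        simp; ring
      · rw [checkFn_nonneg (by linarith : 0 ≤ u - t), max_eq_right (by linarith : t - u ≤ 0)]
        simp; ring
  · rw [show (∫ s in (0:ℝ)..t, (if u < s then (1:ℝ) else 0))
        = -∫ s in t..(0:ℝ), (if u < s then (1:ℝ) else 0) from intervalIntegral.integral_symm t 0,
      ind_int u t 0 ht]
    rcases lt_or_ge u 0 with hu | hu
    · rcases lt_or_ge u t with h1 | h1
      · rw [checkFn_neg hu, checkFn_neg (by linarith : u - t < 0), max_eq_left h1.le,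
          max_eq_left (by linarith : (0:ℝ) ≤ 0 - t)]
        simp; ring
      · rw [checkFn_neg hu, checkFn_nonneg (by linarith : 0 ≤ u - t), max_eq_right h1,
          max_eq_left (by linarith : (0:ℝ) ≤ 0 - u)]
        simp; ring
    · rw [checkFn_nonneg hu, checkFn_nonneg (by linarith : 0 ≤ u - t),
        max_eq_right (ht.trans hu), max_eq_right (by linarith : 0 - u ≤ 0)]
      simp; ring

lemma swap_lemma {Ω : Type*} [MeasurableSpace Ω] (P : Measure Ω) [IsProbabilityMeasure P]
    (ε : Ω → ℝ) (hε : Measurable ε) (α a b : ℝ) :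
    ∫ ω, (∫ s in Set.Ioc a b, ((if ε ω < s then (1:ℝ) else 0) - α)) ∂P
      = ∫ s in Set.Ioc a b, ((P {ω | ε ω < s}).toReal - α) := by
  haveI : IsFiniteMeasure (volume.restrict (Set.Ioc a b)) :=
    ⟨by rw [Measure.restrict_apply_univ, Real.volume_Ioc]; exact ENNReal.ofReal_lt_top⟩
  have hS : MeasurableSet {p : Ω × ℝ | ε p.1 < p.2} :=
    measurableSet_lt (hε.comp measurable_fst) measurable_snd
  have hint : Integrable (Function.uncurry fun ω s => ((if ε ω < s then (1:ℝ) else 0) - α))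
      (P.prod (volume.restrict (Set.Ioc a b))) := by
    have : (Function.uncurry fun ω s => ((if ε ω < s then (1:ℝ) else 0) - α))
        = fun p => Set.indicator {p : Ω × ℝ | ε p.1 < p.2} (fun _ => (1:ℝ)) p - α := by
      funext p; simp [Function.uncurry, Set.indicator_apply]
    rw [this]
    exact ((integrable_const 1).indicator hS).sub (integrable_const α)
  rw [MeasureTheory.integral_integral_swap hint]
  apply MeasureTheory.setIntegral_congr_fun measurableSet_Ioc
  intro s _
  have hs : MeasurableSet {ω | ε ω < s} := hε measurableSet_Iio
  have h1 : (fun ω => if ε ω < s then (1:ℝ) else 0)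
      = Set.indicator {ω | ε ω < s} (fun _ => (1:ℝ)) := by
    funext ω; simp [Set.indicator_apply]
  show ∫ ω, ((if ε ω < s then (1:ℝ) else 0) - α) ∂P = (P {ω | ε ω < s}).toReal - α
  rw [integral_sub _ (integrable_const α), integral_const, h1]
  · have := MeasureTheory.integral_indicator_one (μ := P) hs
    simp only [Pi.one_def] at this
    rw [this]; simp [Measure.real]
  · rw [h1]; exact (integrable_const 1).indicator hs

lemma cdf_ae_eq {Ω : Type*} [MeasurableSpace Ω] (P : Measure Ω) (ε : Ω → ℝ) :
    ∀ᵐ s : ℝ, (P {ω | ε ω ≤ s}).toReal = (P {ω | ε ω < s}).toReal := by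
  have hC := MeasureTheory.countable_meas_le_ne_meas_lt P (fun ω => -ε ω)
  have hsub : {s : ℝ | P {ω | ε ω ≤ s} ≠ P {ω | ε ω < s}}
      ⊆ Neg.neg ⁻¹' {t : ℝ | P {a | t ≤ -ε a} ≠ P {a | t < -ε a}} := by
    intro s hs
    simp only [Set.mem_preimage, Set.mem_setOf_eq]
    have e1 : {a | -s ≤ -ε a} = {ω | ε ω ≤ s} := by ext ω; simp
    have e2 : {a | -s < -ε a} = {ω | ε ω < s} := by ext ω; simp
    rw [e1, e2]; exact hs
  have hcount : Set.Countable {s : ℝ | P {ω | ε ω ≤ s} ≠ P {ω | ε ω < s}} :=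
    Set.Countable.mono hsub (hC.preimage neg_injective)
  have hnull := Set.Countable.measure_zero hcount (volume : Measure ℝ)
  filter_upwards [measure_eq_zero_iff_ae_notMem.mp hnull] with s hs
  simp only [Set.mem_setOf_eq, not_not] at hs
  rw [hs]

/-- Let `ε` be a real random variable with cdf `F(s) = P(ε ≤ s)`, with `P(ε = 0) = 0` and
`F(0) = α` for some `α ∈ (0,1)`. Then for every `t`, the difference of check losses is a.s.
bounded by `|t|` (hence integrable), and
`E[τ_α(ε − t) − τ_α(ε)] = ∫₀^t (F(s) − α) ds`. -/
theorem expected_check_loss_integral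
    {Ω : Type*} [MeasurableSpace Ω] (P : Measure Ω) [IsProbabilityMeasure P]
    (ε : Ω → ℝ) (hε : Measurable ε)
    (F : ℝ → ℝ) (hF : ∀ s, F s = (P {ω | ε ω ≤ s}).toReal)
    (hzero : P {ω | ε ω = 0} = 0)
    (α : ℝ) (hα : α ∈ Set.Ioo (0 : ℝ) 1) (hF0 : F 0 = α) (t : ℝ) :
    (∀ᵐ ω ∂P, |checkFn α (ε ω - t) - checkFn α (ε ω)| ≤ |t|) ∧
    Integrable (fun ω => checkFn α (ε ω - t) - checkFn α (ε ω)) P ∧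
    ∫ ω, (checkFn α (ε ω - t) - checkFn α (ε ω)) ∂P = ∫ s in (0 : ℝ)..t, (F s - α) := by
  obtain ⟨hα0, hα1⟩ := hα
  -- pointwise bound
  have hbd : ∀ u : ℝ, |checkFn α (u - t) - checkFn α u| ≤ |t| := by
    intro u
    rw [key α t u]
    have := intervalIntegral.norm_integral_le_of_norm_le_const
      (a := 0) (b := t) (C := 1) (f := fun s => (if u < s then (1:ℝ) else 0) - α) ?_
    · simpa using this
    · intro x _
      by_cases h : u < x <;> simp [h, Real.norm_eq_abs, abs_le] <;> constructor <;> linarith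
  -- measurability
  have hmc : Measurable (checkFn α) := by
    unfold checkFn
    exact measurable_id.mul (measurable_const.sub
      (Measurable.ite measurableSet_Iio measurable_const measurable_const))
  have hmD : Measurable (fun ω => checkFn α (ε ω - t) - checkFn α (ε ω)) :=
    (hmc.comp (hε.sub measurable_const)).sub (hmc.comp hε)
  have hIntD : Integrable (fun ω => checkFn α (ε ω - t) - checkFn α (ε ω)) P := by
    refine Integrable.mono' (integrable_const |t|) hmD.aestronglyMeasurable ?_
    exact ae_of_all _ fun ω => by simpa [Real.norm_eq_abs] using hbd (ε ω)
  refine ⟨ae_of_all _ fun ω => hbd (ε ω), hIntD, ?_⟩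
  -- main computation
  have hstep1 : ∫ ω, (checkFn α (ε ω - t) - checkFn α (ε ω)) ∂P
      = ∫ ω, (∫ s in (0:ℝ)..t, ((if ε ω < s then (1:ℝ) else 0) - α)) ∂P := by
    apply integral_congr_ae (ae_of_all _ fun ω => key α t (ε ω))
  have haeF : ∀ᵐ s : ℝ, F s - α = (P {ω | ε ω < s}).toReal - α := by
    filter_upwards [cdf_ae_eq P ε] with s hs
    rw [hF s, hs]
  rcases le_total 0 t with ht | ht
  · rw [hstep1]
    simp only [intervalIntegral.integral_of_le ht]
    rw [swap_lemma P ε hε α 0 t]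
    apply setIntegral_congr_ae measurableSet_Ioc
    filter_upwards [haeF] with s hs _
    exact hs.symm
  · rw [hstep1]
    simp only [intervalIntegral.integral_of_ge ht]
    rw [integral_neg, swap_lemma P ε hε α t 0]
    congr 1
    apply setIntegral_congr_ae measurableSet_Ioc
    filter_upwards [haeF] with s hs _
    exact hs.symm
end

section
/- Let ε be a real-valued random variable with density f with respect to Lebesgue measure and cumulative distribution function F, and suppose F(0) = α ∈ (0,1). Suppose there are constants C > 0 and δ > 0 such that |f(e) − f(0)| ≤ C|e| for all |e| ≤ δ. Then for all real numbers r, s with |r| ≤ δ and |s| ≤ δ: | E[ τ_α(ε − s) − τ_α(ε − r) − (s − r)(1{ε ≤ r} − α) ] − ½ f(0)(s − r)² | ≤ (C/2) · max(|r|, |s|) · (s − r)². -/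
open MeasureTheory

lemma checkFn_eq (α u : ℝ) : checkFn α u = α * u + max (-u) 0 := by
  unfold checkFn
  rcases lt_or_ge u 0 with h | h
  · rw [if_pos h, max_eq_left (by linarith)]; ring
  · rw [if_neg (not_lt.mpr h), max_eq_right (by linarith)]; ring

lemma ind_int_le (e a b : ℝ) (hab : a ≤ b) :
    ∫ x in Set.Ioc a b, (if e ≤ x then (1:ℝ) else 0) = max (b - e) 0 - max (a - e) 0 := by
  have hae : (fun x => if e ≤ x then (1:ℝ) else 0)
      =ᵐ[volume.restrict (Set.Ioc a b)] (Set.Ioi e).indicator (fun _ => (1:ℝ)) := by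
    refine ae_restrict_of_ae ?_
    have : {x : ℝ | ¬ ((if e ≤ x then (1:ℝ) else 0) = (Set.Ioi e).indicator (fun _ => (1:ℝ)) x)} ⊆ {e} := by
      intro x hx
      simp only [Set.mem_setOf_eq, Set.indicator, Set.mem_Ioi] at hx
      by_contra hne
      rcases lt_trichotomy x e with h | h | h
      · rw [if_neg (not_le.mpr h), if_neg (not_lt.mpr h.le)] at hx; exact hx rfl
      · exact hne (by simpa using h)
      · rw [if_pos h.le, if_pos h] at hx; exact hx rfl
    exact measure_mono_null this (measure_singleton e)
  rw [integral_congr_ae hae, setIntegral_indicator measurableSet_Ioi, Set.Ioc_inter_Ioi,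
    setIntegral_const]
  simp only [smul_eq_mul, mul_one]
  rcases le_total e a with h | h
  · rw [max_eq_left h, measureReal_def, Real.volume_Ioc, ENNReal.toReal_ofReal (by linarith)]
    rw [max_eq_left (by linarith), max_eq_left (by linarith)]; ring
  · rw [max_eq_right h]
    rcases le_total e b with h2 | h2
    · rw [measureReal_def, Real.volume_Ioc, ENNReal.toReal_ofReal (by linarith),
        max_eq_left (by linarith), max_eq_right (by linarith)]; ring
    · rw [Set.Ioc_eq_empty (by exact not_lt.mpr h2), measureReal_def, measure_empty,
        max_eq_right (by linarith), max_eq_right (by linarith)]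
      simp

lemma intInt_ind (e a b : ℝ) : IntervalIntegrable (fun x => if e ≤ x then (1:ℝ) else 0) volume a b := by
  have hm : Measurable (fun x : ℝ => if e ≤ x then (1:ℝ) else 0) :=
    Measurable.ite measurableSet_Ici measurable_const measurable_const
  rw [intervalIntegrable_iff]
  haveI : IsFiniteMeasure (volume.restrict (Set.uIoc a b)) := by
    constructor
    rw [Measure.restrict_apply_univ, Set.uIoc, Real.volume_Ioc]
    exact ENNReal.ofReal_lt_top
  exact (integrable_const (1:ℝ)).mono' hm.aestronglyMeasurable
    (Filter.Eventually.of_forall fun x => by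
      by_cases h : e ≤ x <;> simp [h])

lemma L1 (e a b : ℝ) :
    ∫ x in a..b, (if e ≤ x then (1:ℝ) else 0) = max (b - e) 0 - max (a - e) 0 := by
  rcases le_total a b with h | h
  · rw [intervalIntegral.integral_of_le h, ind_int_le e a b h]
  · rw [intervalIntegral.integral_symm, intervalIntegral.integral_of_le h, ind_int_le e b a h]
    ring

lemma pointwise_id (α r s e : ℝ) :
    checkFn α (e - s) - checkFn α (e - r) - (s - r) * ((if e ≤ r then (1:ℝ) else 0) - α)
      = ∫ x in r..s, ((if e ≤ x then (1:ℝ) else 0) - (if e ≤ r then (1:ℝ) else 0)) := by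
  rw [intervalIntegral.integral_sub (intInt_ind e r s) intervalIntegrable_const, L1,
    intervalIntegral.integral_const, checkFn_eq, checkFn_eq, smul_eq_mul]
  have h1 : -(e - s) = s - e := by ring
  have h2 : -(e - r) = r - e := by ring
  rw [h1, h2]
  ring

lemma int_linear (K c a b : ℝ) : ∫ x in a..b, K * (x - c) = K * ((b - c)^2 - (a - c)^2) / 2 := by
  have h : ∫ x in a..b, K * (x - c)
      = K * ((∫ x in a..b, x) - (b - a) * c) := by
    rw [intervalIntegral.integral_const_mul,
      intervalIntegral.integral_sub intervalIntegral.intervalIntegrable_id intervalIntegrable_const,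
      intervalIntegral.integral_const, smul_eq_mul]
  open intervalIntegral in rw [h, integral_id]; ring

/-- Quadratic (Bahadur-type) expansion of the expected check loss: if `ε` has density `f`
with cdf `F`, `F(0) = α ∈ (0,1)`, and `|f(e) − f(0)| ≤ C|e|` for `|e| ≤ δ`, then for
`|r|, |s| ≤ δ`,
`| E[τ_α(ε−s) − τ_α(ε−r) − (s−r)(1{ε ≤ r} − α)] − ½ f(0)(s−r)² | ≤ (C/2) max(|r|,|s|) (s−r)²`. -/
theorem expected_check_loss_quadratic_expansion
    {Ω : Type*} [MeasurableSpace Ω] (P : Measure Ω) [IsProbabilityMeasure P]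
    (ε : Ω → ℝ) (hε : Measurable ε)
    (f : ℝ → ℝ)
    (hf : ∀ s : Set ℝ, MeasurableSet s → (P (ε ⁻¹' s)).toReal = ∫ x in s, f x)
    (F : ℝ → ℝ) (hF : ∀ t, F t = (P {ω | ε ω ≤ t}).toReal)
    (α : ℝ) (hα : α ∈ Set.Ioo (0 : ℝ) 1) (hF0 : F 0 = α)
    (C δ : ℝ) (hC : 0 < C) (hδ : 0 < δ)
    (hLip : ∀ e : ℝ, |e| ≤ δ → |f e - f 0| ≤ C * |e|)
    (r s : ℝ) (hr : |r| ≤ δ) (hs : |s| ≤ δ) :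
    |(∫ ω, (checkFn α (ε ω - s) - checkFn α (ε ω - r)
        - (s - r) * ((if ε ω ≤ r then (1 : ℝ) else 0) - α)) ∂P)
      - (1 / 2) * f 0 * (s - r) ^ 2|
      ≤ C / 2 * max |r| |s| * (s - r) ^ 2 := by
  set M := max |r| |s| with hM
  have hMδ : M ≤ δ := max_le hr hs
  have hM0 : (0:ℝ) ≤ M := le_trans (abs_nonneg r) (le_max_left _ _)
  -- f is integrable
  have hf_int : Integrable f := by
    by_contra h
    have h1 := hf Set.univ MeasurableSet.univ
    rw [Set.preimage_univ, measure_univ, Measure.restrict_univ, integral_undef h] at h1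
    simp at h1
  -- F differences
  have hFdiff : ∀ a b : ℝ, F b - F a = ∫ u in a..b, f u := by
    have key : ∀ a b : ℝ, a ≤ b → F b - F a = ∫ u in Set.Ioc a b, f u := by
      intro a b hab
      have h1 := hf (Set.Ioc a b) measurableSet_Ioc
      have hpre : ε ⁻¹' Set.Ioc a b = {ω | ε ω ≤ b} \ {ω | ε ω ≤ a} := by
        ext ω
        simp only [Set.mem_preimage, Set.mem_Ioc, Set.mem_diff, Set.mem_setOf_eq, not_le]
        exact ⟨fun h => ⟨h.2, h.1⟩, fun h => ⟨h.2, h.1⟩⟩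
      have hsub : {ω | ε ω ≤ a} ⊆ {ω | ε ω ≤ b} := fun ω h => le_trans h hab
      have hma : MeasurableSet {ω | ε ω ≤ a} := hε measurableSet_Iic
      rw [hpre, measure_diff hsub hma.nullMeasurableSet (measure_ne_top P _),
        ENNReal.toReal_sub_of_le (measure_mono hsub) (measure_ne_top P _)] at h1
      rw [hF a, hF b, ← h1]
    intro a b
    rcases le_total a b with h | h
    · rw [intervalIntegral.integral_of_le h]; exact key a b h
    · rw [intervalIntegral.integral_symm, intervalIntegral.integral_of_le h, ← key b a h]; ring
  -- inner expectation
  have inner : ∀ x : ℝ,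
      ∫ ω, ((if ε ω ≤ x then (1:ℝ) else 0) - (if ε ω ≤ r then (1:ℝ) else 0)) ∂P = F x - F r := by
    intro x
    have hmeas : ∀ t : ℝ, Measurable (fun ω => if ε ω ≤ t then (1:ℝ) else 0) := fun t =>
      Measurable.ite (hε measurableSet_Iic) measurable_const measurable_const
    have hint : ∀ t : ℝ, Integrable (fun ω => if ε ω ≤ t then (1:ℝ) else 0) P := fun t =>
      (integrable_const (1:ℝ)).mono' (hmeas t).aestronglyMeasurable
        (Filter.Eventually.of_forall fun ω => by by_cases h : ε ω ≤ t <;> simp [h])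
    have ev : ∀ t : ℝ, ∫ ω, (if ε ω ≤ t then (1:ℝ) else 0) ∂P = F t := by
      intro t
      have heq : (fun ω => if ε ω ≤ t then (1:ℝ) else 0)
          = Set.indicator {ω | ε ω ≤ t} (fun _ => (1:ℝ)) := by
        funext ω; by_cases h : ε ω ≤ t <;> simp [h, Set.indicator]
      have hms : MeasurableSet {ω | ε ω ≤ t} := hε measurableSet_Iic
      rw [heq, integral_indicator_const (1:ℝ) hms, hF]
      simp [measureReal_def]
    rw [integral_sub (hint x) (hint r), ev, ev]
  -- Fubini
  have key : ∀ a b : ℝ, a ≤ b →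
      ∫ ω, (∫ x in Set.Ioc a b, ((if ε ω ≤ x then (1:ℝ) else 0) - (if ε ω ≤ r then (1:ℝ) else 0))) ∂P
        = ∫ x in Set.Ioc a b, (F x - F r) := by
    intro a b hab
    haveI : IsFiniteMeasure (volume.restrict (Set.Ioc a b)) := by
      constructor
      rw [Measure.restrict_apply_univ, Real.volume_Ioc]
      exact ENNReal.ofReal_lt_top
    have hmeas : Measurable (Function.uncurry fun (ω : Ω) (x : ℝ) =>
        ((if ε ω ≤ x then (1:ℝ) else 0) - (if ε ω ≤ r then (1:ℝ) else 0))) := by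
      have m1 : MeasurableSet {p : Ω × ℝ | ε p.1 ≤ p.2} :=
        measurableSet_le (hε.comp measurable_fst) measurable_snd
      have m2 : MeasurableSet {p : Ω × ℝ | ε p.1 ≤ r} :=
        measurableSet_le (hε.comp measurable_fst) measurable_const
      exact (Measurable.ite m1 measurable_const measurable_const).sub
        (Measurable.ite m2 measurable_const measurable_const)
    have hint : Integrable (Function.uncurry fun (ω : Ω) (x : ℝ) =>
        ((if ε ω ≤ x then (1:ℝ) else 0) - (if ε ω ≤ r then (1:ℝ) else 0)))
        (P.prod (volume.restrict (Set.Ioc a b))) := by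
      refine (integrable_const (2:ℝ)).mono' hmeas.aestronglyMeasurable
        (Filter.Eventually.of_forall fun p => ?_)
      simp only [Function.uncurry, Real.norm_eq_abs]
      by_cases h1 : ε p.1 ≤ p.2 <;> by_cases h2 : ε p.1 ≤ r <;> simp [h1, h2]
    rw [integral_integral_swap hint]
    exact setIntegral_congr_fun measurableSet_Ioc fun x _ => inner x
  -- step 1
  have step1 : (∫ ω, (checkFn α (ε ω - s) - checkFn α (ε ω - r)
        - (s - r) * ((if ε ω ≤ r then (1 : ℝ) else 0) - α)) ∂P)
      = ∫ x in r..s, (F x - F r) := by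
    rw [integral_congr_ae (Filter.Eventually.of_forall fun ω => pointwise_id α r s (ε ω))]
    rcases le_total r s with hrs | hrs
    · simp only [intervalIntegral.integral_of_le hrs]
      exact key r s hrs
    · simp only [intervalIntegral.integral_of_ge hrs, integral_neg]
      rw [key s r hrs]
  rw [step1]
  have hf_ii : ∀ a b : ℝ, IntervalIntegrable f volume a b := fun a b => hf_int.intervalIntegrable
  have hrM : |r| ≤ M := le_max_left _ _
  have hsM : |s| ≤ M := le_max_right _ _
  have hcont : Continuous fun x => F x - F r := by
    have he : (fun x => F x - F r) = fun x => ∫ u in r..x, f u := funext fun x => hFdiff r x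
    rw [he]
    exact intervalIntegral.continuous_primitive hf_ii r
  have hbound : ∀ x, |x| ≤ M → |F x - F r - f 0 * (x - r)| ≤ C * M * |x - r| := by
    intro x hxM
    have e1 : f 0 * (x - r) = ∫ u in r..x, (fun _ => f 0) u := by
      rw [intervalIntegral.integral_const, smul_eq_mul]; ring
    rw [hFdiff r x, e1, ← intervalIntegral.integral_sub (hf_ii r x) intervalIntegrable_const]
    have hb : ∀ u ∈ Set.uIoc r x, ‖f u - f 0‖ ≤ C * M := by
      intro u hu
      rw [Set.uIoc, Set.mem_Ioc] at hu
      have huM : |u| ≤ M := by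
        rw [abs_le] at hxM hrM ⊢
        constructor
        · calc -M ≤ min r x := le_min (by linarith [hrM.1]) (by linarith [hxM.1])
          _ ≤ u := hu.1.le
        · calc u ≤ max r x := hu.2
          _ ≤ M := max_le (by linarith [hrM.2]) (by linarith [hxM.2])
      calc ‖f u - f 0‖ ≤ C * |u| := hLip u (le_trans huM hMδ)
      _ ≤ C * M := mul_le_mul_of_nonneg_left huM hC.le
    calc |∫ u in r..x, (f u - f 0)| ≤ C * M * |x - r| :=
        intervalIntegral.norm_integral_le_of_norm_le_const hb
    _ = C * M * |x - r| := rfl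
  have hlin_cont : ∀ c : ℝ, Continuous fun x : ℝ => C * M * (x - c) := fun c =>
    continuous_const.mul (continuous_sub_right _)
  have hint_h : IntervalIntegrable (fun x => F x - F r - f 0 * (x - r)) volume r s :=
    (hcont.sub (continuous_const.mul (continuous_sub_right _))).intervalIntegrable r s
  have e2 : (1/2 : ℝ) * f 0 * (s - r)^2 = ∫ x in r..s, f 0 * (x - r) := by
    rw [int_linear]; ring
  rw [e2, ← intervalIntegral.integral_sub (g := fun x => f 0 * (x - r)) (hcont.intervalIntegrable r s)
    ((continuous_const.mul (continuous_sub_right _) : Continuous fun x : ℝ => f 0 * (x - r)).intervalIntegrable r s)]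
  rcases le_total r s with hrs | hrs
  · have hIcc : ∀ x ∈ Set.Icc r s, |x| ≤ M := by
      intro x hx
      rw [abs_le] at hrM hsM ⊢
      exact ⟨by linarith [hx.1, hrM.1], by linarith [hx.2, hsM.2]⟩
    calc |∫ x in r..s, (F x - F r - f 0 * (x - r))|
        ≤ ∫ x in r..s, |F x - F r - f 0 * (x - r)| :=
          intervalIntegral.abs_integral_le_integral_abs hrs
      _ ≤ ∫ x in r..s, C * M * (x - r) := by
          refine intervalIntegral.integral_mono_on hrs hint_h.abs
            ((hlin_cont r).intervalIntegrable r s) fun x hx => ?_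
          calc |F x - F r - f 0 * (x - r)| ≤ C * M * |x - r| := hbound x (hIcc x hx)
          _ = C * M * (x - r) := by rw [abs_of_nonneg (by linarith [hx.1])]
      _ = C * M * ((s - r)^2 - (r - r)^2) / 2 := int_linear _ _ _ _
      _ ≤ C / 2 * M * (s - r)^2 := by nlinarith
  · have hIcc : ∀ x ∈ Set.Icc s r, |x| ≤ M := by
      intro x hx
      rw [abs_le] at hrM hsM ⊢
      exact ⟨by linarith [hx.1, hsM.1], by linarith [hx.2, hrM.2]⟩
    rw [intervalIntegral.integral_symm, abs_neg]
    calc |∫ x in s..r, (F x - F r - f 0 * (x - r))|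
        ≤ ∫ x in s..r, |F x - F r - f 0 * (x - r)| :=
          intervalIntegral.abs_integral_le_integral_abs hrs
      _ ≤ ∫ x in s..r, C * M * (x - r) * (-1) := by
          refine intervalIntegral.integral_mono_on hrs hint_h.symm.abs
            (((hlin_cont r).mul continuous_const).intervalIntegrable s r) fun x hx => ?_
          calc |F x - F r - f 0 * (x - r)| ≤ C * M * |x - r| := hbound x (hIcc x hx)
          _ = C * M * (x - r) * (-1) := by rw [abs_of_nonpos (by linarith [hx.2])]; ring
      _ = (C * M * ((r - r)^2 - (s - r)^2) / 2) * (-1) := by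
          have he : (fun x => C * M * (x - r) * (-1)) = fun x => (-(C * M)) * (x - r) := by
            funext x; ring
          rw [he, int_linear]; ring
      _ ≤ C / 2 * M * (s - r)^2 := by nlinarith
end

section
/- (Stability of weighted empirical quantiles under uniform perturbation.) Let α ∈ (0,1), n ≥ 1, w₁, …, w_n ≥ 0 with Σ w_i > 0, δ ≥ 0, and let y, y′ ∈ ℝⁿ with |y_i − y′_i| ≤ δ for all i. Let Q (resp. Q′) be the set of minimizers over θ ∈ ℝ of θ ↦ Σ_{i=1}^n w_i τ_α(y_i − θ) (resp. with y′ in place of y). Then Q and Q′ are nonempty compact intervals, and for every θ ∈ Q there exists θ′ ∈ Q′ with |θ − θ′| ≤ δ, and for every θ′ ∈ Q′ there exists θ ∈ Q with |θ − θ′| ≤ δ (i.e., the Hausdorff distance between Q and Q′ is at most δ). -/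
lemma subgrad_plus (α u t : ℝ) :
    checkFn α u + t * ((if u ≤ 0 then 1 else 0) - α) ≤ checkFn α (u - t) := by
  unfold checkFn; split_ifs <;> nlinarith

lemma subgrad_minus (α u t : ℝ) :
    checkFn α u + t * ((if u < 0 then 1 else 0) - α) ≤ checkFn α (u - t) := by
  unfold checkFn; split_ifs <;> nlinarith

lemma eq_plus (α u t : ℝ) (ht : 0 ≤ t) (h : u ≤ 0 ∨ t ≤ u) :
    checkFn α (u - t) = checkFn α u + t * ((if u ≤ 0 then 1 else 0) - α) := by
  unfold checkFn
  rcases h with h | h <;> split_ifs <;> nlinarith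

lemma eq_minus (α u t : ℝ) (ht : t ≤ 0) (h : 0 ≤ u ∨ u ≤ t) :
    checkFn α (u - t) = checkFn α u + t * ((if u < 0 then 1 else 0) - α) := by
  unfold checkFn
  rcases h with h | h <;> split_ifs <;> nlinarith

lemma sum_lin (n : ℕ) (w B : Fin n → ℝ) (c α : ℝ) (q : Fin n → Prop) [DecidablePred q] :
    ∑ i, (w i * B i + c * ((if q i then w i else 0) - α * w i))
      = ∑ i, w i * B i + c * ((∑ i, if q i then w i else 0) - α * ∑ i, w i) := by
  rw [Finset.sum_add_distrib, ← Finset.mul_sum, Finset.sum_sub_distrib, ← Finset.mul_sum]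

lemma ind_mul (w θ yi : ℝ) : (if yi < θ then w else 0) = w * (if yi - θ < 0 then 1 else 0) := by
  split_ifs with h1 h2 h2 <;> simp_all <;> linarith

lemma ind_mul' (w θ yi : ℝ) : (if yi ≤ θ then w else 0) = w * (if yi - θ ≤ 0 then 1 else 0) := by
  split_ifs with h1 h2 h2 <;> simp_all <;> linarith

/-- key characterization -/
lemma quantile_char (α : ℝ) (n : ℕ) (w y : Fin n → ℝ) (hw : ∀ i, 0 ≤ w i) (θ : ℝ) :
    (∀ θ' : ℝ, ∑ i, w i * checkFn α (y i - θ) ≤ ∑ i, w i * checkFn α (y i - θ')) ↔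
      ((∑ i, if y i < θ then w i else 0) ≤ α * ∑ i, w i ∧
        α * ∑ i, w i ≤ ∑ i, if y i ≤ θ then w i else 0) := by
  constructor
  · intro hmin
    constructor
    · -- left derivative: use θ' = θ - ε
      obtain ⟨ε, hεpos, hεsep⟩ : ∃ ε : ℝ, 0 < ε ∧ ∀ i, y i < θ → y i - θ ≤ -ε := by
        by_cases hne : (Finset.univ.filter (fun i => y i < θ)).Nonempty
        · refine ⟨(Finset.univ.filter (fun i => y i < θ)).inf' hne (fun i => θ - y i),
            ?_, ?_⟩
          · rw [Finset.lt_inf'_iff]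
            intro i hi
            simp only [Finset.mem_filter] at hi
            linarith [hi.2]
          · intro i hyi
            have hi : i ∈ Finset.univ.filter (fun j => y j < θ) := by
              simp [hyi]
            have := Finset.inf'_le (fun i => θ - y i) hi
            linarith
        · refine ⟨1, one_pos, fun i hyi => ?_⟩
          rw [Finset.filter_nonempty_iff] at hne
          push_neg at hne
          linarith [hne i (Finset.mem_univ i)]
      have h3 : ∑ i, w i * checkFn α (y i - (θ - ε))
          = ∑ i, w i * checkFn α (y i - θ)
            + (-ε) * ((∑ i, if y i < θ then w i else 0) - α * ∑ i, w i) := by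
        rw [← sum_lin]
        refine Finset.sum_congr rfl (fun i _ => ?_)
        have e : y i - (θ - ε) = y i - θ - (-ε) := by ring
        rw [e, eq_minus α (y i - θ) (-ε) (by linarith)
          (by by_cases hyi : y i < θ
              · exact Or.inr (hεsep i hyi)
              · exact Or.inl (by linarith [not_lt.mp hyi])),
          ind_mul (w i) θ (y i)]
        ring
      have h2 := hmin (θ - ε)
      rw [h3] at h2
      nlinarith
    · -- right derivative: use θ' = θ + ε
      obtain ⟨ε, hεpos, hεsep⟩ : ∃ ε : ℝ, 0 < ε ∧ ∀ i, θ < y i → ε ≤ y i - θ := by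
        by_cases hne : (Finset.univ.filter (fun i => θ < y i)).Nonempty
        · refine ⟨(Finset.univ.filter (fun i => θ < y i)).inf' hne (fun i => y i - θ),
            ?_, ?_⟩
          · rw [Finset.lt_inf'_iff]
            intro i hi
            simp only [Finset.mem_filter] at hi
            linarith [hi.2]
          · intro i hyi
            have hi : i ∈ Finset.univ.filter (fun j => θ < y j) := by
              simp [hyi]
            have := Finset.inf'_le (fun i => y i - θ) hi
            exact this
        · refine ⟨1, one_pos, fun i hyi => ?_⟩
          rw [Finset.filter_nonempty_iff] at hne
          push_neg at hne
          linarith [hne i (Finset.mem_univ i)]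
      have h3 : ∑ i, w i * checkFn α (y i - (θ + ε))
          = ∑ i, w i * checkFn α (y i - θ)
            + ε * ((∑ i, if y i ≤ θ then w i else 0) - α * ∑ i, w i) := by
        rw [← sum_lin]
        refine Finset.sum_congr rfl (fun i _ => ?_)
        have e : y i - (θ + ε) = y i - θ - ε := by ring
        rw [e, eq_plus α (y i - θ) ε (by linarith)
          (by by_cases hyi : θ < y i
              · exact Or.inr (hεsep i hyi)
              · exact Or.inl (by linarith [not_lt.mp hyi])),
          ind_mul' (w i) θ (y i)]
        ring
      have h2 := hmin (θ + ε)
      rw [h3] at h2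
      nlinarith
  · intro ⟨hL, hR⟩ θ'
    rcases le_total θ θ' with hle | hle
    · have key : ∀ i : Fin n, w i * checkFn α (y i - θ)
          + (θ' - θ) * ((if y i ≤ θ then w i else 0) - α * w i)
            ≤ w i * checkFn α (y i - θ') := by
        intro i
        have e : y i - θ' = y i - θ - (θ' - θ) := by ring
        rw [e, ind_mul' (w i) θ (y i)]
        have h2 := mul_le_mul_of_nonneg_left (subgrad_plus α (y i - θ) (θ' - θ)) (hw i)
        nlinarith [h2]
      have := Finset.sum_le_sum (s := Finset.univ) (fun i _ => key i)
      rw [sum_lin] at this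
      nlinarith
    · have key : ∀ i : Fin n, w i * checkFn α (y i - θ)
          + (θ' - θ) * ((if y i < θ then w i else 0) - α * w i)
            ≤ w i * checkFn α (y i - θ') := by
        intro i
        have e : y i - θ' = y i - θ - (θ' - θ) := by ring
        rw [e, ind_mul (w i) θ (y i)]
        have h2 := mul_le_mul_of_nonneg_left (subgrad_minus α (y i - θ) (θ' - θ)) (hw i)
        nlinarith [h2]
      have := Finset.sum_le_sum (s := Finset.univ) (fun i _ => key i)
      rw [sum_lin] at this
      nlinarith

lemma ind_sum_mono (n : ℕ) (w : Fin n → ℝ) (hw : ∀ i, 0 ≤ w i)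
    (P Q : Fin n → Prop) [DecidablePred P] [DecidablePred Q] (h : ∀ i, P i → Q i) :
    ∑ i, (if P i then w i else 0) ≤ ∑ i, (if Q i then w i else 0) := by
  refine Finset.sum_le_sum (fun i _ => ?_)
  by_cases hp : P i
  · simp [hp, h i hp]
  · simp [hp]
    split <;> simp [hw i]

lemma gap_above (n : ℕ) (y : Fin n → ℝ) (c : ℝ) :
    ∃ ε : ℝ, 0 < ε ∧ ∀ i, c < y i → c + ε ≤ y i := by
  by_cases hne : (Finset.univ.filter (fun i => c < y i)).Nonempty
  · refine ⟨(Finset.univ.filter (fun i => c < y i)).inf' hne (fun i => y i - c), ?_, ?_⟩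
    · rw [Finset.lt_inf'_iff]
      intro i hi
      simp only [Finset.mem_filter] at hi
      linarith [hi.2]
    · intro i hyi
      have hi : i ∈ Finset.univ.filter (fun j => c < y j) := by simp [hyi]
      have := Finset.inf'_le (fun i => y i - c) hi
      linarith
  · refine ⟨1, one_pos, fun i hyi => ?_⟩
    rw [Finset.filter_nonempty_iff] at hne
    push_neg at hne
    linarith [hne i (Finset.mem_univ i)]

lemma gap_below (n : ℕ) (y : Fin n → ℝ) (c : ℝ) :
    ∃ ε : ℝ, 0 < ε ∧ ∀ i, y i < c → y i ≤ c - ε := by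
  obtain ⟨ε, hε, hsep⟩ := gap_above n (fun i => -y i) (-c)
  exact ⟨ε, hε, fun i hyi => by have := hsep i (by linarith); linarith⟩

/-- The minimizer set is a nonempty closed interval, with explicit description. -/
lemma quantile_interval (α : ℝ) (hα : α ∈ Set.Ioo (0 : ℝ) 1)
    (n : ℕ) (hn : 1 ≤ n) (w : Fin n → ℝ)
    (hw : ∀ i, 0 ≤ w i) (hwsum : 0 < ∑ i, w i) (y : Fin n → ℝ) :
    ∃ p q : ℝ, p ≤ q ∧
      {θ : ℝ | ∀ θ' : ℝ, ∑ i, w i * checkFn α (y i - θ) ≤ ∑ i, w i * checkFn α (y i - θ')}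
        = Set.Icc p q := by
  obtain ⟨hα0, hα1⟩ := hα
  set W := ∑ i, w i with hW
  have hαW : 0 < α * W := mul_pos hα0 hwsum
  have hαW' : α * W < W := by nlinarith
  have hne : (Finset.univ : Finset (Fin n)).Nonempty := ⟨⟨0, hn⟩, Finset.mem_univ _⟩
  set TR : Set ℝ := {t | α * W ≤ ∑ i, if y i ≤ t then w i else 0} with hTR
  set TL : Set ℝ := {t | (∑ i, if y i < t then w i else 0) ≤ α * W} with hTL
  -- TR nonempty and bounded below
  have hTRne : (Finset.univ.sup' hne y) ∈ TR := by
    have : ∀ i : Fin n, (w i) = (if y i ≤ Finset.univ.sup' hne y then w i else 0) := by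
      intro i
      rw [if_pos (Finset.le_sup' y (Finset.mem_univ i))]
    simp only [hTR, Set.mem_setOf_eq]
    rw [← Finset.sum_congr rfl (fun i _ => this i)]
    linarith
  have hTRbdd : BddBelow TR := by
    refine ⟨Finset.univ.inf' hne y, fun t ht => ?_⟩
    by_contra hlt
    push_neg at hlt
    have : ∀ i : Fin n, (if y i ≤ t then w i else 0) = 0 := by
      intro i
      rw [if_neg]
      push_neg
      exact lt_of_lt_of_le hlt (Finset.inf'_le y (Finset.mem_univ i))
    simp only [hTR, Set.mem_setOf_eq] at ht
    rw [Finset.sum_congr rfl (fun i _ => this i)] at ht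
    simp at ht
    linarith
  have hTLne : (Finset.univ.inf' hne y) ∈ TL := by
    have : ∀ i : Fin n, (if y i < Finset.univ.inf' hne y then w i else 0) = 0 := by
      intro i
      rw [if_neg]
      push_neg
      exact Finset.inf'_le y (Finset.mem_univ i)
    simp only [hTL, Set.mem_setOf_eq]
    rw [Finset.sum_congr rfl (fun i _ => this i)]
    simp
    linarith
  have hTLbdd : BddAbove TL := by
    refine ⟨Finset.univ.sup' hne y + 1, fun t ht => ?_⟩
    by_contra hlt
    push_neg at hlt
    have : ∀ i : Fin n, (w i) = (if y i < t then w i else 0) := by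
      intro i
      rw [if_pos]
      calc y i ≤ Finset.univ.sup' hne y := Finset.le_sup' y (Finset.mem_univ i)
        _ < t := by linarith
    simp only [hTL, Set.mem_setOf_eq] at ht
    rw [← Finset.sum_congr rfl (fun i _ => this i)] at ht
    linarith
  set p := sInf TR with hp
  set q := sSup TL with hq
  -- facts about p
  have hpR : ∀ t, p < t → α * W ≤ ∑ i, if y i ≤ t then w i else 0 := by
    intro t hpt
    obtain ⟨t', ht'TR, ht'⟩ := Real.lt_sInf_add_pos ⟨_, hTRne⟩ (by linarith : (0:ℝ) < t - p)
    have ht'p : t' < t := by rw [← hp] at ht'; linarith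
    calc α * W ≤ ∑ i, if y i ≤ t' then w i else 0 := ht'TR
      _ ≤ ∑ i, if y i ≤ t then w i else 0 :=
        ind_sum_mono n w hw _ _ (fun i hi => le_trans hi (le_of_lt ht'p))
  have hpmem : ∀ t, t ∈ TR → p ≤ t := fun t ht => csInf_le hTRbdd ht
  have hpRp : α * W ≤ ∑ i, if y i ≤ p then w i else 0 := by
    obtain ⟨ε, hε, hsep⟩ := gap_above n y p
    have heq : (∑ i, if y i ≤ p then w i else 0) = ∑ i, if y i ≤ p + ε / 2 then w i else 0 := by
      refine Finset.sum_congr rfl (fun i _ => ?_)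
      rcases le_or_gt (y i) p with hyi | hyi
      · rw [if_pos hyi, if_pos (by linarith)]
      · rw [if_neg (not_le.mpr hyi), if_neg (by push_neg; linarith [hsep i hyi])]
    rw [heq]
    exact hpR _ (by linarith)
  have hpLp : (∑ i, if y i < p then w i else 0) ≤ α * W := by
    obtain ⟨ε, hε, hsep⟩ := gap_below n y p
    have hlt : p - ε / 2 ∉ TR := by
      intro hmem
      have := hpmem _ hmem
      linarith
    simp only [hTR, Set.mem_setOf_eq, not_le] at hlt
    calc (∑ i, if y i < p then w i else 0)
        ≤ ∑ i, if y i ≤ p - ε / 2 then w i else 0 :=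
          ind_sum_mono n w hw _ _ (fun i hi => by linarith [hsep i hi])
      _ ≤ α * W := le_of_lt hlt
  -- facts about q
  have hqL : ∀ t, t < q → (∑ i, if y i < t then w i else 0) ≤ α * W := by
    intro t htq
    obtain ⟨t', ht'TL, ht'⟩ := Real.add_neg_lt_sSup ⟨_, hTLne⟩ (by linarith : t - q < 0)
    have ht'p : t < t' := by rw [← hq] at ht'; linarith
    calc (∑ i, if y i < t then w i else 0)
        ≤ ∑ i, if y i < t' then w i else 0 :=
          ind_sum_mono n w hw _ _ (fun i hi => lt_trans hi ht'p)
      _ ≤ α * W := ht'TL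
  have hqmem : ∀ t, t ∈ TL → t ≤ q := fun t ht => le_csSup hTLbdd ht
  have hqLq : (∑ i, if y i < q then w i else 0) ≤ α * W := by
    obtain ⟨ε, hε, hsep⟩ := gap_below n y q
    have heq : (∑ i, if y i < q then w i else 0) = ∑ i, if y i < q - ε / 2 then w i else 0 := by
      refine Finset.sum_congr rfl (fun i _ => ?_)
      rcases lt_or_ge (y i) q with hyi | hyi
      · rw [if_pos hyi, if_pos (by linarith [hsep i hyi])]
      · rw [if_neg (not_lt.mpr hyi), if_neg (by push_neg; linarith)]
    rw [heq]
    exact hqL _ (by linarith)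
  have hqRq : α * W ≤ ∑ i, if y i ≤ q then w i else 0 := by
    obtain ⟨ε, hε, hsep⟩ := gap_above n y q
    have hlt : q + ε / 2 ∉ TL := by
      intro hmem
      have := hqmem _ hmem
      linarith
    simp only [hTL, Set.mem_setOf_eq, not_le] at hlt
    calc α * W ≤ ∑ i, if y i < q + ε / 2 then w i else 0 := le_of_lt hlt
      _ ≤ ∑ i, if y i ≤ q then w i else 0 := by
          refine ind_sum_mono n w hw _ _ (fun i hi => ?_)
          by_contra hyi
          push_neg at hyi
          linarith [hsep i hyi]
  -- p ≤ q
  have hpq : p ≤ q := hqmem p hpLp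
  refine ⟨p, q, hpq, ?_⟩
  ext θ
  rw [Set.mem_setOf_eq, quantile_char α n w y hw θ, Set.mem_Icc]
  constructor
  · rintro ⟨hL, hR⟩
    exact ⟨hpmem θ hR, hqmem θ hL⟩
  · rintro ⟨hpθ, hθq⟩
    constructor
    · rcases eq_or_lt_of_le hθq with h | h
      · rw [h]; exact hqLq
      · exact hqL θ h
    · rcases eq_or_lt_of_le hpθ with h | h
      · rw [← h]; exact hpRp
      · exact hpR θ h

/-- One-sided stability. -/
lemma quantile_stab (α : ℝ) (hα : α ∈ Set.Ioo (0 : ℝ) 1)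
    (n : ℕ) (hn : 1 ≤ n) (w : Fin n → ℝ)
    (hw : ∀ i, 0 ≤ w i) (hwsum : 0 < ∑ i, w i)
    (δ : ℝ) (hδ : 0 ≤ δ) (y y' : Fin n → ℝ) (h : ∀ i, |y i - y' i| ≤ δ)
    (θ : ℝ)
    (hθ : ∀ θ' : ℝ, ∑ i, w i * checkFn α (y i - θ) ≤ ∑ i, w i * checkFn α (y i - θ')) :
    ∃ θ'', (∀ θ' : ℝ, ∑ i, w i * checkFn α (y' i - θ'') ≤ ∑ i, w i * checkFn α (y' i - θ'))
      ∧ |θ - θ''| ≤ δ := by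
  obtain ⟨hL, hR⟩ := (quantile_char α n w y hw θ).mp hθ
  obtain ⟨p', q', hpq', hIcc⟩ := quantile_interval α hα n hn w hw hwsum y'
  have hmem : ∀ t, t ∈ Set.Icc p' q' →
      (∀ θ' : ℝ, ∑ i, w i * checkFn α (y' i - t) ≤ ∑ i, w i * checkFn α (y' i - θ')) := by
    intro t ht
    have : t ∈ {θ : ℝ | ∀ θ' : ℝ,
        ∑ i, w i * checkFn α (y' i - θ) ≤ ∑ i, w i * checkFn α (y' i - θ')} := by
      rw [hIcc]; exact ht
    exact this
  have hnotmem : ∀ t, t ∉ Set.Icc p' q' →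
      ¬((∑ i, if y' i < t then w i else 0) ≤ α * ∑ i, w i ∧
        α * ∑ i, w i ≤ ∑ i, if y' i ≤ t then w i else 0) := by
    intro t ht hchar
    exact ht (hIcc ▸ (Set.mem_setOf_eq ▸ (quantile_char α n w y' hw t).mpr hchar))
  obtain ⟨hLq', hRq'⟩ := (quantile_char α n w y' hw q').mp
    (hmem q' ⟨hpq', le_refl q'⟩)
  obtain ⟨hLp', hRp'⟩ := (quantile_char α n w y' hw p').mp
    (hmem p' ⟨le_refl p', hpq'⟩)
  rcases lt_or_ge q' θ with h1 | h1
  · -- θ > q' : take θ'' = q'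
    refine ⟨q', hmem q' ⟨hpq', le_refl q'⟩, ?_⟩
    rw [abs_of_nonneg (by linarith)]
    by_contra hcon
    push_neg at hcon
    have hnot := hnotmem (θ - δ) (by
      rw [Set.mem_Icc]
      push_neg
      intro _
      linarith)
    have hRtd : α * ∑ i, w i ≤ ∑ i, if y' i ≤ θ - δ then w i else 0 :=
      le_trans hRq' (ind_sum_mono n w hw _ _ (fun i hi => by linarith))
    have hLtd : (∑ i, if y' i < θ - δ then w i else 0) ≤ α * ∑ i, w i := by
      refine le_trans (ind_sum_mono n w hw (fun i => y' i < θ - δ)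
        (fun i => y i < θ) (fun i hi => ?_)) hL
      have := abs_le.mp (h i)
      linarith [this.1]
    exact hnot ⟨hLtd, hRtd⟩
  · rcases lt_or_ge θ p' with h2 | h2
    · -- θ < p' : take θ'' = p'
      refine ⟨p', hmem p' ⟨le_refl p', hpq'⟩, ?_⟩
      rw [abs_of_nonpos (by linarith)]
      by_contra hcon
      push_neg at hcon
      have hnot := hnotmem (θ + δ) (by
        rw [Set.mem_Icc]
        push_neg
        intro hc
        linarith)
      have hLtd : (∑ i, if y' i < θ + δ then w i else 0) ≤ α * ∑ i, w i :=
        le_trans (ind_sum_mono n w hw _ _ (fun i hi => by linarith)) hLp'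
      have hRtd : α * ∑ i, w i ≤ ∑ i, if y' i ≤ θ + δ then w i else 0 := by
        refine le_trans hR (ind_sum_mono n w hw (fun i => y i ≤ θ)
          (fun i => y' i ≤ θ + δ) (fun i hi => ?_))
        have := abs_le.mp (h i)
        linarith [this.2]
      exact hnot ⟨hLtd, hRtd⟩
    · exact ⟨θ, hmem θ ⟨h2, h1⟩, by simp [hδ]⟩


/-- Stability of weighted empirical quantiles under uniform perturbation: the sets of
minimizers of `θ ↦ Σ wᵢ τ_α(yᵢ − θ)` and `θ ↦ Σ wᵢ τ_α(y′ᵢ − θ)` are nonempty compact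
intervals at Hausdorff distance at most `δ` whenever `|yᵢ − y′ᵢ| ≤ δ` for all `i`. -/
theorem weighted_quantile_stability
    (α : ℝ) (hα : α ∈ Set.Ioo (0 : ℝ) 1)
    (n : ℕ) (hn : 1 ≤ n) (w : Fin n → ℝ)
    (hw : ∀ i, 0 ≤ w i) (hwsum : 0 < ∑ i, w i)
    (δ : ℝ) (hδ : 0 ≤ δ) (y y' : Fin n → ℝ) (h : ∀ i, |y i - y' i| ≤ δ) :
    (∃ p q : ℝ, p ≤ q ∧
        {θ : ℝ | ∀ θ' : ℝ, ∑ i, w i * checkFn α (y i - θ) ≤ ∑ i, w i * checkFn α (y i - θ')}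
          = Set.Icc p q) ∧
    (∃ p q : ℝ, p ≤ q ∧
        {θ : ℝ | ∀ θ' : ℝ, ∑ i, w i * checkFn α (y' i - θ) ≤ ∑ i, w i * checkFn α (y' i - θ')}
          = Set.Icc p q) ∧
    (∀ θ, (∀ θ' : ℝ, ∑ i, w i * checkFn α (y i - θ) ≤ ∑ i, w i * checkFn α (y i - θ')) →
        ∃ θ'', (∀ θ' : ℝ, ∑ i, w i * checkFn α (y' i - θ'') ≤ ∑ i, w i * checkFn α (y' i - θ'))
          ∧ |θ - θ''| ≤ δ) ∧
    (∀ θ'', (∀ θ' : ℝ, ∑ i, w i * checkFn α (y' i - θ'') ≤ ∑ i, w i * checkFn α (y' i - θ')) →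
        ∃ θ, (∀ θ' : ℝ, ∑ i, w i * checkFn α (y i - θ) ≤ ∑ i, w i * checkFn α (y i - θ'))
          ∧ |θ - θ''| ≤ δ) := by
  refine ⟨quantile_interval α hα n hn w hw hwsum y,
    quantile_interval α hα n hn w hw hwsum y', ?_, ?_⟩
  · exact fun θ hθ => quantile_stab α hα n hn w hw hwsum δ hδ y y' h θ hθ
  · intro θ'' hθ''
    obtain ⟨θ, hθ, habs⟩ := quantile_stab α hα n hn w hw hwsum δ hδ y' y
      (fun i => by rw [abs_sub_comm]; exact h i) θ'' hθ''
    exact ⟨θ, hθ, by rw [abs_sub_comm]; exact habs⟩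
end
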